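/- Let T be a conformal Killing-Yano tensor on a metric Lie algebra (𝔤, ⟨·,·⟩) with associated 1-form θ ≠ 0 and associated vector ξ. Then the dimension of 𝔤 is odd, the orthogonal complement ξ^⊥ is invariant under T and the restriction T|_{ξ^⊥} : ξ^⊥ → ξ^⊥ is a linear isomorphism, and ξ^⊥ is invariant under the operator ad_ξ. -/

import Mathlib

section Defs

variable {g : Type*} [LieRing g] [LieAlgebra ℝ g]

/-- `B` is a (positive definite) inner product on the real Lie algebra `g`,
given as a bilinear form. -/
structure IsInnerProduct (B : g →ₗ[ℝ] g →ₗ[ℝ] ℝ) : Prop where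
  symm : ∀ x y : g, B x y = B y x
  posdef : ∀ x : g, x ≠ 0 → 0 < B x x

/-- The Koszul formula characterizing the Levi-Civita connection of the metric Lie
algebra `(g, B)`: `2⟨∇ₓy, z⟩ = ⟨[x,y], z⟩ − ⟨[y,z], x⟩ + ⟨[z,x], y⟩`. -/
def IsLeviCivita (B : g →ₗ[ℝ] g →ₗ[ℝ] ℝ) (D : g → g → g) : Prop :=
  ∀ x y z : g, 2 * B (D x y) z = B ⁅x, y⁆ z - B ⁅y, z⁆ x + B ⁅z, x⁆ y

/-- A skew-symmetric endomorphism with respect to `B`. -/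
def IsSkewSymmetric (B : g →ₗ[ℝ] g →ₗ[ℝ] ℝ) (T : g →ₗ[ℝ] g) : Prop :=
  ∀ x y : g, B (T x) y = - B x (T y)

/-- The conformal Killing-Yano equation for an endomorphism `T` with associated 1-form `θ`:
`⟨(∇ₓT)y, z⟩ + ⟨(∇_yT)x, z⟩ = 2⟨x,y⟩θ(z) − ⟨y,z⟩θ(x) − ⟨x,z⟩θ(y)`,
where `(∇ₓT)y = ∇ₓ(Ty) − T(∇ₓy)`. -/
def IsCKYWith (B : g →ₗ[ℝ] g →ₗ[ℝ] ℝ) (D : g → g → g) (T : g →ₗ[ℝ] g)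
    (θ : g →ₗ[ℝ] ℝ) : Prop :=
  ∀ x y z : g,
    B (D x (T y) - T (D x y)) z + B (D y (T x) - T (D y x)) z =
      2 * B x y * θ z - B y z * θ x - B x z * θ y

/-- A Killing-Yano tensor is a CKY tensor with `θ = 0`. -/
def IsKY (B : g →ₗ[ℝ] g →ₗ[ℝ] ℝ) (D : g → g → g) (T : g →ₗ[ℝ] g) : Prop :=
  IsCKYWith B D T 0

/-- A parallel tensor: `(∇ₓT)y = 0` for all `x, y`. -/
def IsParallelT (D : g → g → g) (T : g →ₗ[ℝ] g) : Prop :=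
  ∀ x y : g, D x (T y) - T (D x y) = 0

/-- The orthogonal complement of a submodule with respect to the bilinear form `B`. -/
def orthComp (B : g →ₗ[ℝ] g →ₗ[ℝ] ℝ) (p : Submodule ℝ g) : Submodule ℝ g where
  carrier := {x : g | ∀ y ∈ p, B x y = 0}
  add_mem' := by
    intro a b ha hb y hy
    simp only [map_add, LinearMap.add_apply, ha y hy, hb y hy, add_zero]
  zero_mem' := by
    intro y hy
    simp
  smul_mem' := by
    intro c a ha y hy
    simp only [map_smul, LinearMap.smul_apply, ha y hy, smul_eq_mul, mul_zero]

end Defs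

section AuxLemmas

variable {g : Type*} [LieRing g] [LieAlgebra ℝ g]
variable {B : g →ₗ[ℝ] g →ₗ[ℝ] ℝ} {D : g → g → g} {T : g →ₗ[ℝ] g} {θ : g →ₗ[ℝ] ℝ}

lemma aux_lc_skew (hD : IsLeviCivita B D) (x a b : g) :
    B (D x a) b = - B (D x b) a := by
  have e1 := hD x a b
  have e2 := hD x b a
  have h1 : B ⁅x, b⁆ a = - B ⁅b, x⁆ a := by
    rw [show ⁅x, b⁆ = -⁅b, x⁆ from (lie_skew x b).symm, map_neg, LinearMap.neg_apply]
  have h2 : B ⁅b, a⁆ x = - B ⁅a, b⁆ x := by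
    rw [show ⁅b, a⁆ = -⁅a, b⁆ from (lie_skew b a).symm, map_neg, LinearMap.neg_apply]
  have h3 : B ⁅a, x⁆ b = - B ⁅x, a⁆ b := by
    rw [show ⁅a, x⁆ = -⁅x, a⁆ from (lie_skew a x).symm, map_neg, LinearMap.neg_apply]
  linarith

lemma aux_lc_smul (hD : IsLeviCivita B D) (x a b : g) (r : ℝ) :
    B (D x (r • a)) b = r * B (D x a) b := by
  have e1 := hD x (r • a) b
  have e2 := hD x a b
  simp only [lie_smul, smul_lie, map_smul, LinearMap.smul_apply, smul_eq_mul] at e1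
  linear_combination (e1 - r * e2) / 2

lemma aux_lc_zero (hD : IsLeviCivita B D) (x b : g) :
    B (D x 0) b = 0 := by
  have e1 := hD x 0 b
  simp only [lie_zero, zero_lie, map_zero, LinearMap.zero_apply] at e1
  linarith

lemma aux_cky' (hT : IsSkewSymmetric B T) (hCKY : IsCKYWith B D T θ) (x y z : g) :
    B (D x (T y)) z + B (D x y) (T z) + (B (D y (T x)) z + B (D y x) (T z)) =
      2 * B x y * θ z - B y z * θ x - B x z * θ y := by
  have h := hCKY x y z
  simp only [map_sub, LinearMap.sub_apply] at h
  rw [hT (D x y) z, hT (D y x) z] at h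
  linarith

lemma aux_c_skew (hD : IsLeviCivita B D) (x y z : g) :
    B (D x (T y)) z + B (D x y) (T z) = -(B (D x (T z)) y + B (D x z) (T y)) := by
  rw [aux_lc_skew hD x (T y) z, aux_lc_skew hD x y (T z)]
  ring

end AuxLemmas

section AuxLemmas2

variable {g : Type*} [LieRing g] [LieAlgebra ℝ g]
variable {B : g →ₗ[ℝ] g →ₗ[ℝ] ℝ} {D : g → g → g} {T : g →ₗ[ℝ] g} {θ : g →ₗ[ℝ] ℝ}

lemma aux_eig (hB : IsInnerProduct B) (hD : IsLeviCivita B D) (hT : IsSkewSymmetric B T)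
    (hCKY : IsCKYWith B D T θ) (μ : ℝ) (w : g) (hw : T (T w) = μ • w) :
    θ (T w) = 0 := by
  rcases eq_or_ne w 0 with rfl | hw0
  · simp
  have e1 : B (D w (T (T w))) w = μ * B (D w w) w := by
    rw [hw]; exact aux_lc_smul hD w w w μ
  have e2 : B (D w w) (T (T w)) = μ * B (D w w) w := by
    rw [hw, map_smul, smul_eq_mul]
  have h2 := aux_c_skew (T := T) hD w (T w) w
  have hP : B (D w (T w)) (T w) + B (D w w) (T (T w)) = 0 := by linarith
  have h3 := aux_cky' hT hCKY w w (T w)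
  have h4 : B w (T w) = 0 := by
    have h5 := hT w w
    have h6 := hB.symm (T w) w
    linarith
  rw [h4] at h3
  simp only [zero_mul, sub_zero] at h3
  have h7 : B w w * θ (T w) = 0 := by linarith
  have h8 : B w w ≠ 0 := ne_of_gt (hB.posdef w hw0)
  exact (mul_eq_zero.mp h7).resolve_left h8

lemma aux_theta_eigen (hB : IsInnerProduct B) (hD : IsLeviCivita B D)
    (hT : IsSkewSymmetric B T) (hCKY : IsCKYWith B D T θ) (μ : ℝ) (w : g)
    (hw : T (T w) = μ • w) (hμ : μ ≠ 0) : θ w = 0 := by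
  have hw2 : T (T (T w)) = μ • T w := by rw [hw, map_smul]
  have h := aux_eig hB hD hT hCKY μ (T w) hw2
  rw [hw, map_smul, smul_eq_mul] at h
  exact (mul_eq_zero.mp h).resolve_left hμ

lemma aux_key (hD : IsLeviCivita B D) (hT : IsSkewSymmetric B T)
    (hCKY : IsCKYWith B D T θ) (w : g) (hw : T w = 0) (z : g) :
    B (T (D w w)) z = B w z * θ w - B w w * θ z := by
  have h1 := aux_cky' hT hCKY w w z
  rw [hw] at h1
  have h0 := aux_lc_zero hD w z
  have h2 := hT (D w w) z
  linarith

lemma aux_Txi (hB : IsInnerProduct B) (hD : IsLeviCivita B D) (hT : IsSkewSymmetric B T)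
    (hCKY : IsCKYWith B D T θ) [FiniteDimensional ℝ g] (ξ : g) (hξ : ∀ x, θ x = B ξ x) :
    T ξ = 0 := by
  let core : InnerProductSpace.Core ℝ g :=
    { inner := fun x y => B x y
      conj_inner_symm := fun x y => by simpa using hB.symm y x
      re_inner_nonneg := fun x => by
        rcases eq_or_ne x 0 with rfl | h
        · simp
        · simpa using (hB.posdef x h).le
      add_left := fun x y z => by simp
      smul_left := fun x y r => by simp
      definite := fun x hx => by
        by_contra h
        exact (hB.posdef x h).ne' (by simpa using hx) }
  letI : NormedAddCommGroup g := core.toNormedAddCommGroup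
  letI : InnerProductSpace ℝ g := InnerProductSpace.ofCore core.toCore
  have hA : LinearMap.IsSymmetric (T ∘ₗ T) := by
    intro x y
    show B (T (T x)) y = B x (T (T y))
    rw [hT (T x) y, hT x (T y), neg_neg]
  have hle : (⨆ μ, Module.End.eigenspace (T ∘ₗ T) μ) ≤ LinearMap.ker (B (T ξ)) := by
    refine iSup_le fun μ => fun v hv => ?_
    have hv' : T (T v) = μ • v := by
      have := Module.End.mem_eigenspace_iff.mp hv
      simpa using this
    have h0 : θ (T v) = 0 := aux_eig hB hD hT hCKY μ v hv'
    have hb : B (T ξ) v = - θ (T v) := by rw [hT ξ v, ← hξ (T v)]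
    simp [LinearMap.mem_ker, hb, h0]
  have htop : (⨆ μ, Module.End.eigenspace (T ∘ₗ T) μ) = ⊤ := by
    rw [← Submodule.orthogonal_eq_bot_iff]
    exact hA.orthogonalComplement_iSup_eigenspaces_eq_bot
  have hmem : T ξ ∈ (⨆ μ, Module.End.eigenspace (T ∘ₗ T) μ) := by
    rw [htop]; exact Submodule.mem_top
  have h0 : B (T ξ) (T ξ) = 0 := by
    have := hle hmem
    simpa using this
  by_contra hne
  exact (hB.posdef _ hne).ne' h0

end AuxLemmas2

section AuxLemmas3

variable {g : Type*} [LieRing g] [LieAlgebra ℝ g]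
variable {B : g →ₗ[ℝ] g →ₗ[ℝ] ℝ} {D : g → g → g} {T : g →ₗ[ℝ] g} {θ : g →ₗ[ℝ] ℝ}

lemma aux_ker (hB : IsInnerProduct B) (hD : IsLeviCivita B D) (hT : IsSkewSymmetric B T)
    (hCKY : IsCKYWith B D T θ) (ξ : g) (hξ : ∀ x, θ x = B ξ x) (hTξ : T ξ = 0)
    (w : g) (hw : T w = 0) : B ξ ξ • w = B ξ w • ξ := by
  have e := aux_key hD hT hCKY w hw ξ
  have l : B (T (D w w)) ξ = 0 := by rw [hT (D w w) ξ, hTξ, map_zero, neg_zero]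
  rw [l, hξ w, hξ ξ, hB.symm w ξ] at e
  have hq : B ξ w * B ξ w = B w w * B ξ ξ := by linarith
  have hBvv : B (B ξ ξ • w - B ξ w • ξ) (B ξ ξ • w - B ξ w • ξ) = 0 := by
    simp only [map_sub, map_smul, LinearMap.sub_apply, LinearMap.smul_apply, smul_eq_mul]
    have h3 := hB.symm w ξ
    linear_combination (-(B ξ ξ)) * hq + (-(B ξ ξ) * B ξ w) * h3
  have hv0 : B ξ ξ • w - B ξ w • ξ = 0 := by
    by_contra hne
    exact (hB.posdef _ hne).ne' hBvv
  exact sub_eq_zero.mp hv0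

end AuxLemmas3

/-- If `T` is a CKY tensor with `θ ≠ 0` on a metric Lie algebra, then `dim 𝔤`
is odd, `ξ^⊥` is `T`-invariant and `T|_{ξ^⊥} : ξ^⊥ → ξ^⊥` is a linear isomorphism, and
`ξ^⊥` is invariant under `ad_ξ`. -/
theorem strict_cky_odd_dim_and_invariance {g : Type*} [LieRing g] [LieAlgebra ℝ g]
    [FiniteDimensional ℝ g]
    (B : g →ₗ[ℝ] g →ₗ[ℝ] ℝ) (hB : IsInnerProduct B)
    (D : g → g → g) (hD : IsLeviCivita B D)
    (T : g →ₗ[ℝ] g) (hT : IsSkewSymmetric B T)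
    (θ : g →ₗ[ℝ] ℝ) (hCKY : IsCKYWith B D T θ) (hθ : θ ≠ 0)
    (ξ : g) (hξ : ∀ x : g, θ x = B ξ x) :
    Odd (Module.finrank ℝ g) ∧
    (∀ x ∈ orthComp B (Submodule.span ℝ {ξ}), T x ∈ orthComp B (Submodule.span ℝ {ξ})) ∧
    (∀ y ∈ orthComp B (Submodule.span ℝ {ξ}),
      ∃! x, x ∈ orthComp B (Submodule.span ℝ {ξ}) ∧ T x = y) ∧
    (∀ x ∈ orthComp B (Submodule.span ℝ {ξ}), ⁅ξ, x⁆ ∈ orthComp B (Submodule.span ℝ {ξ})) := by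
  classical
  have hξ0 : ξ ≠ 0 := by
    intro h
    apply hθ
    ext x
    rw [hξ x, h]
    simp
  have hBξξ : 0 < B ξ ξ := hB.posdef ξ hξ0
  have hTξ : T ξ = 0 := aux_Txi hB hD hT hCKY ξ hξ
  set p := Submodule.span ℝ {ξ} with hp
  have hmem : ∀ x : g, x ∈ orthComp B p ↔ B x ξ = 0 := by
    intro x
    constructor
    · intro h; exact h ξ (Submodule.mem_span_singleton_self ξ)
    · intro h y hy
      obtain ⟨a, rfl⟩ := Submodule.mem_span_singleton.mp hy
      rw [map_smul, smul_eq_mul, h, mul_zero]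
  have hTV : ∀ x ∈ orthComp B p, T x ∈ orthComp B p := by
    intro x _
    refine (hmem _).mpr ?_
    rw [hT x ξ, hTξ, map_zero, neg_zero]
  have hker : ∀ w : g, T w = 0 → w ∈ orthComp B p → w = 0 := by
    intro w hw hwV
    have h := aux_ker hB hD hT hCKY ξ hξ hTξ w hw
    have h2 : B ξ w = 0 := by rw [hB.symm ξ w]; exact (hmem w).mp hwV
    rw [h2, zero_smul] at h
    rcases smul_eq_zero.mp h with h3 | h3
    · exact absurd h3 (ne_of_gt hBξξ)
    · exact h3
  let e : ↥(orthComp B p) →ₗ[ℝ] ↥(orthComp B p) := T.restrict hTV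
  have hinj : Function.Injective e := by
    intro a b hab
    have h1 : T ((a : g) - b) = 0 := by
      have h2 := congrArg (Subtype.val) hab
      simp only [e, LinearMap.restrict_apply] at h2
      rw [map_sub, h2, sub_self]
    have h3 := hker _ h1 (sub_mem a.2 b.2)
    exact Subtype.ext (sub_eq_zero.mp h3)
  have hsurj : Function.Surjective e := (LinearMap.injective_iff_surjective).mp hinj
  have hexu : ∀ y ∈ orthComp B p, ∃! x, x ∈ orthComp B p ∧ T x = y := by
    intro y hy
    obtain ⟨x, hx⟩ := hsurj ⟨y, hy⟩
    have hTx : T (x : g) = y := by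
      have h2 := congrArg Subtype.val hx
      simpa only [e, LinearMap.restrict_apply] using h2
    refine ⟨x, ⟨x.2, hTx⟩, ?_⟩
    rintro z ⟨hz, hTz⟩
    have h1 : T (z - (x : g)) = 0 := by rw [map_sub, hTz, hTx, sub_self]
    have h3 := hker _ h1 (sub_mem hz x.2)
    exact sub_eq_zero.mp h3
  -- D ξ ξ = 0 and ad_ξ invariance
  have hTD : T (D ξ ξ) = 0 := by
    have hz : ∀ z, B (T (D ξ ξ)) z = 0 := by
      intro z
      have e1 := aux_key hD hT hCKY ξ hTξ z
      rw [hξ ξ, hξ z] at e1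
      rw [e1]; ring
    by_contra h
    exact (hB.posdef _ h).ne' (hz _)
  have hD0 : D ξ ξ = 0 := by
    have h := aux_ker hB hD hT hCKY ξ hξ hTξ (D ξ ξ) hTD
    have h2 : B ξ (D ξ ξ) = 0 := by
      rw [hB.symm ξ (D ξ ξ)]
      have h4 := aux_lc_skew hD ξ ξ ξ
      linarith
    rw [h2, zero_smul] at h
    rcases smul_eq_zero.mp h with h3 | h3
    · exact absurd h3 (ne_of_gt hBξξ)
    · exact h3
  have hbr : ∀ x : g, B ⁅ξ, x⁆ ξ = 0 := by
    intro x
    have e1 := hD ξ x ξ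
    have e2 : B ⁅x, ξ⁆ ξ = - B ⁅ξ, x⁆ ξ := by
      rw [show ⁅x, ξ⁆ = -⁅ξ, x⁆ from (lie_skew x ξ).symm, map_neg, LinearMap.neg_apply]
    have e3 : B ⁅ξ, ξ⁆ x = 0 := by rw [lie_self]; simp
    have e4 : B (D ξ x) ξ = - B (D ξ ξ) x := aux_lc_skew hD ξ x ξ
    rw [hD0] at e4
    simp only [map_zero, LinearMap.zero_apply, neg_zero] at e4
    linarith
  have hadV : ∀ x ∈ orthComp B p, ⁅ξ, x⁆ ∈ orthComp B p := by
    intro x _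
    exact (hmem _).mpr (hbr x)
  -- finrank
  have hrank : Module.finrank ℝ g = Module.finrank ℝ ↥(orthComp B p) + 1 := by
    have hVk : orthComp B p = LinearMap.ker (B ξ) := by
      ext x
      rw [LinearMap.mem_ker, hmem x]
      constructor
      · intro h; rw [hB.symm ξ x]; exact h
      · intro h; rw [hB.symm x ξ]; exact h
    have hs : Function.Surjective (B ξ) := by
      intro r
      refine ⟨(r / B ξ ξ) • ξ, ?_⟩
      rw [map_smul, smul_eq_mul, div_mul_cancel₀ r (ne_of_gt hBξξ)]
    have hr := LinearMap.finrank_range_add_finrank_ker (B ξ)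
    rw [LinearMap.range_eq_top.mpr hs, finrank_top, Module.finrank_self] at hr
    rw [hVk]
    omega
  have heven : Even (Module.finrank ℝ ↥(orthComp B p)) := by
    let core : InnerProductSpace.Core ℝ g :=
      { inner := fun x y => B x y
        conj_inner_symm := fun x y => by simpa using hB.symm y x
        re_inner_nonneg := fun x => by
          rcases eq_or_ne x 0 with rfl | h
          · simp
          · simpa using (hB.posdef x h).le
        add_left := fun x y z => by simp
        smul_left := fun x y r => by simp
        definite := fun x hx => by
          by_contra h
          exact (hB.posdef x h).ne' (by simpa using hx) }
    letI : NormedAddCommGroup g := core.toNormedAddCommGroup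
    letI : InnerProductSpace ℝ g := InnerProductSpace.ofCore core.toCore
    let b := stdOrthonormalBasis ℝ (↥(orthComp B p))
    let M := LinearMap.toMatrix b.toBasis b.toBasis e
    have hM : ∀ i j, M i j = B ((b i : g)) (T ((b j : g))) := by
      intro i j
      simp only [M, LinearMap.toMatrix_apply, OrthonormalBasis.coe_toBasis,
        OrthonormalBasis.coe_toBasis_repr_apply, OrthonormalBasis.repr_apply_apply]
      rw [Submodule.coe_inner]
      rw [show ((e (b j) : g)) = T ((b j : g)) from rfl]
      rfl
    have hMT : M.transpose = - M := by
      ext i j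
      rw [Matrix.transpose_apply, Matrix.neg_apply, hM, hM]
      rw [hB.symm ((b j : g)) (T ((b i : g))), hT ((b i : g)) ((b j : g))]
    have hdet : M.det = (-1 : ℝ) ^ (Module.finrank ℝ ↥(orthComp B p)) * M.det := by
      conv_lhs => rw [← Matrix.det_transpose M, hMT]
      rw [Matrix.det_neg, Fintype.card_fin]
    have hunit : IsUnit M.det :=
      LinearEquiv.isUnit_det (LinearEquiv.ofBijective e ⟨hinj, hsurj⟩) b.toBasis b.toBasis
    have h1 : (-1 : ℝ) ^ (Module.finrank ℝ ↥(orthComp B p)) = 1 :=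
      mul_right_cancel₀ hunit.ne_zero (hdet.symm.trans (one_mul M.det).symm)
    exact (neg_one_pow_eq_one_iff_even (by norm_num : (-1 : ℝ) ≠ 1)).mp h1
  refine ⟨?_, hTV, hexu, hadV⟩
  rw [hrank]
  rcases heven with ⟨k, hk⟩
  exact ⟨k, by omega⟩
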